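/- Commuting-conversion reduction is locally confluent: if t ⇝_cc u and t ⇝_cc u' in one step, then there exists a term v with u ⇝_cc* v and u' ⇝_cc* v; consequently (by strong normalisation and Newman's lemma), commuting-conversion reduction is confluent. -/

import Mathlib

namespace STLCp

/-- Types of the simply-typed λ-calculus with sums, over base types `B`. -/
inductive Ty (B : Type) : Type
  | base : B → Ty B
  | unit : Ty B
  | empty : Ty B
  | prod : Ty B → Ty B → Ty B
  | sum : Ty B → Ty B → Ty B
  | arr : Ty B → Ty B → Ty B

/-- Terms (de Bruijn style) over a set of constants `C`. -/
inductive Tm (C : Type) : Type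
  | cst : C → Tm C
  | var : Nat → Tm C
  | star : Tm C
  | pair : Tm C → Tm C → Tm C
  | proj1 : Tm C → Tm C
  | proj2 : Tm C → Tm C
  | lam : Tm C → Tm C
  | app : Tm C → Tm C → Tm C
  | inl : Tm C → Tm C
  | inr : Tm C → Tm C
  | raise : Tm C → Tm C
  | case : Tm C → Tm C → Tm C → Tm C

variable {B C : Type}

/-- Lifting a renaming under a binder. -/
def liftRen (ρ : Nat → Nat) : Nat → Nat
  | 0 => 0
  | n + 1 => ρ n + 1

/-- Action of renamings on terms. -/
def rename (ρ : Nat → Nat) : Tm C → Tm C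
  | .cst c => .cst c
  | .var n => .var (ρ n)
  | .star => .star
  | .pair t u => .pair (rename ρ t) (rename ρ u)
  | .proj1 t => .proj1 (rename ρ t)
  | .proj2 t => .proj2 (rename ρ t)
  | .lam t => .lam (rename (liftRen ρ) t)
  | .app t u => .app (rename ρ t) (rename ρ u)
  | .inl t => .inl (rename ρ t)
  | .inr t => .inr (rename ρ t)
  | .raise t => .raise (rename ρ t)
  | .case s bl br => .case (rename ρ s) (rename (liftRen ρ) bl) (rename (liftRen ρ) br)

/-- Lifting a parallel substitution under a binder. -/
def liftSub (σ : Nat → Tm C) : Nat → Tm C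
  | 0 => .var 0
  | n + 1 => rename Nat.succ (σ n)

/-- Action of parallel substitutions on terms, `t[σ]`. -/
def subst (σ : Nat → Tm C) : Tm C → Tm C
  | .cst c => .cst c
  | .var n => σ n
  | .star => .star
  | .pair t u => .pair (subst σ t) (subst σ u)
  | .proj1 t => .proj1 (subst σ t)
  | .proj2 t => .proj2 (subst σ t)
  | .lam t => .lam (subst (liftSub σ) t)
  | .app t u => .app (subst σ t) (subst σ u)
  | .inl t => .inl (subst σ t)
  | .inr t => .inr (subst σ t)
  | .raise t => .raise (subst σ t)
  | .case s bl br => .case (subst σ s) (subst (liftSub σ) bl) (subst (liftSub σ) br)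

/-- The substitution `u..`: maps the last variable to `u`, the identity elsewhere. -/
def sub0 (u : Tm C) : Nat → Tm C
  | 0 => u
  | n + 1 => .var n

/-- Eliminations: application, projections and case analysis. -/
inductive Elim (C : Type) : Type
  | eapp : Tm C → Elim C
  | eproj1 : Elim C
  | eproj2 : Elim C
  | ecase : Tm C → Tm C → Elim C

/-- Plugging a term into an elimination, `e[t]`. -/
def plug : Elim C → Tm C → Tm C
  | .eapp u, t => .app t u
  | .eproj1, t => .proj1 t
  | .eproj2, t => .proj2 t
  | .ecase bl br, t => .case t bl br

/-- Weakening the contents of an elimination (used when pushing it under a binder). -/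
def weakenElim : Elim C → Elim C
  | .eapp u => .eapp (rename Nat.succ u)
  | .eproj1 => .eproj1
  | .eproj2 => .eproj2
  | .ecase bl br => .ecase (rename (liftRen Nat.succ) bl) (rename (liftRen Nat.succ) br)

/-- The β-rules. -/
inductive BetaBase : Tm C → Tm C → Prop
  | proj1 (t u : Tm C) : BetaBase (.proj1 (.pair t u)) t
  | proj2 (t u : Tm C) : BetaBase (.proj2 (.pair t u)) u
  | app (t u : Tm C) : BetaBase (.app (.lam t) u) (subst (sub0 u) t)
  | case_inl (a bl br : Tm C) : BetaBase (.case (.inl a) bl br) (subst (sub0 a) bl)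
  | case_inr (b bl br : Tm C) : BetaBase (.case (.inr b) bl br) (subst (sub0 b) br)

/-- The commuting-conversion rules. -/
inductive CCBase : Tm C → Tm C → Prop
  | raise (e : Elim C) (t : Tm C) : CCBase (plug e (.raise t)) (.raise t)
  | case (e : Elim C) (s bl br : Tm C) :
      CCBase (plug e (.case s bl br))
        (.case s (plug (weakenElim e) bl) (plug (weakenElim e) br))

/-- Congruence closure of a base relation on terms. -/
inductive Cong (R : Tm C → Tm C → Prop) : Tm C → Tm C → Prop
  | base : R t u → Cong R t u
  | pairL : Cong R t t' → Cong R (.pair t u) (.pair t' u)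
  | pairR : Cong R u u' → Cong R (.pair t u) (.pair t u')
  | proj1 : Cong R t t' → Cong R (.proj1 t) (.proj1 t')
  | proj2 : Cong R t t' → Cong R (.proj2 t) (.proj2 t')
  | lam : Cong R t t' → Cong R (.lam t) (.lam t')
  | appL : Cong R t t' → Cong R (.app t u) (.app t' u)
  | appR : Cong R u u' → Cong R (.app t u) (.app t u')
  | inl : Cong R t t' → Cong R (.inl t) (.inl t')
  | inr : Cong R t t' → Cong R (.inr t) (.inr t')
  | raise : Cong R t t' → Cong R (.raise t) (.raise t')
  | caseS : Cong R s s' → Cong R (.case s bl br) (.case s' bl br)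
  | caseL : Cong R bl bl' → Cong R (.case s bl br) (.case s bl' br)
  | caseR : Cong R br br' → Cong R (.case s bl br) (.case s bl br')

/-- One-step β-reduction. -/
def StepBeta : Tm C → Tm C → Prop := Cong BetaBase

/-- One-step commuting-conversion reduction. -/
def StepCC : Tm C → Tm C → Prop := Cong CCBase

/-- One-step reduction (β-rules together with commuting conversions). -/
def Step : Tm C → Tm C → Prop := Cong (fun t u => BetaBase t u ∨ CCBase t u)

/-- Reflexive-transitive closures. -/
def RedsBeta : Tm C → Tm C → Prop := Relation.ReflTransGen StepBeta
def RedsCC : Tm C → Tm C → Prop := Relation.ReflTransGen StepCC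
def Reds : Tm C → Tm C → Prop := Relation.ReflTransGen Step

/-- Typing judgment `Γ ⊢ t : A` over a language given by `tyof : C → Ty B`.
Contexts are lists of types, the head being the last-bound variable. -/
inductive HasType (tyof : C → Ty B) : List (Ty B) → Tm C → Ty B → Prop
  | cst (Γ) (c : C) : HasType tyof Γ (.cst c) (tyof c)
  | var : Γ[n]? = some A → HasType tyof Γ (.var n) A
  | star : HasType tyof Γ .star .unit
  | pair : HasType tyof Γ t A → HasType tyof Γ u A' →
      HasType tyof Γ (.pair t u) (.prod A A')
  | proj1 : HasType tyof Γ p (.prod A A') → HasType tyof Γ (.proj1 p) A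
  | proj2 : HasType tyof Γ p (.prod A A') → HasType tyof Γ (.proj2 p) A'
  | lam : HasType tyof (A :: Γ) t A' → HasType tyof Γ (.lam t) (.arr A A')
  | app : HasType tyof Γ t (.arr A A') → HasType tyof Γ u A →
      HasType tyof Γ (.app t u) A'
  | raise : HasType tyof Γ t .empty → HasType tyof Γ (.raise t) A
  | inl : HasType tyof Γ a A → HasType tyof Γ (.inl a) (.sum A A')
  | inr : HasType tyof Γ b A' → HasType tyof Γ (.inr b) (.sum A A')
  | case : HasType tyof Γ s (.sum A A') → HasType tyof (A :: Γ) bl T →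
      HasType tyof (A' :: Γ) br T → HasType tyof Γ (.case s bl br) T

mutual
  /-- Bidirectional checking judgment `Γ ⊢ t ⇐ A` (normal forms). -/
  inductive Check (tyof : C → Ty B) : List (Ty B) → Tm C → Ty B → Prop
    | star : Check tyof Γ .star .unit
    | pair : Check tyof Γ t A → Check tyof Γ u A' →
        Check tyof Γ (.pair t u) (.prod A A')
    | lam : Check tyof (A :: Γ) t A' → Check tyof Γ (.lam t) (.arr A A')
    | inl : Check tyof Γ a A → Check tyof Γ (.inl a) (.sum A A')
    | inr : Check tyof Γ b A' → Check tyof Γ (.inr b) (.sum A A')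
    | demote : Infer tyof Γ t A → A = A' → Check tyof Γ t A'
    | raise : Infer tyof Γ t .empty → Check tyof Γ (.raise t) A
    | case : Infer tyof Γ s (.sum A A') → Check tyof (A :: Γ) bl T →
        Check tyof (A' :: Γ) br T → Check tyof Γ (.case s bl br) T

  /-- Bidirectional inference judgment `Γ ⊢ t ⇒ A` (neutral forms). -/
  inductive Infer (tyof : C → Ty B) : List (Ty B) → Tm C → Ty B → Prop
    | cst (Γ) (c : C) : Infer tyof Γ (.cst c) (tyof c)
    | var : Γ[n]? = some A → Infer tyof Γ (.var n) A
    | proj1 : Infer tyof Γ p (.prod A A') → Infer tyof Γ (.proj1 p) A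
    | proj2 : Infer tyof Γ p (.prod A A') → Infer tyof Γ (.proj2 p) A'
    | app : Infer tyof Γ t (.arr A A') → Check tyof Γ u A →
        Infer tyof Γ (.app t u) A'
end

/-- The substitution replacing the last variable by `inl` of itself
(used in the η-law for sums). -/
def inlSub : Nat → Tm C
  | 0 => .inl (.var 0)
  | n + 1 => .var (n + 1)

/-- The substitution replacing the last variable by `inr` of itself. -/
def inrSub : Nat → Tm C
  | 0 => .inr (.var 0)
  | n + 1 => .var (n + 1)

/-- Conversion `Γ ⊢ t ≡ u : A`: the least congruent equivalence relation on
well-typed terms containing the β and η laws for all type formers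
(the equational theory of bicartesian closed categories). -/
inductive Conv (tyof : C → Ty B) : List (Ty B) → Tm C → Tm C → Ty B → Prop
  | refl : HasType tyof Γ t A → Conv tyof Γ t t A
  | symm : Conv tyof Γ t u A → Conv tyof Γ u t A
  | trans : Conv tyof Γ t u A → Conv tyof Γ u v A → Conv tyof Γ t v A
  -- congruence
  | pair : Conv tyof Γ t t' A → Conv tyof Γ u u' A' →
      Conv tyof Γ (.pair t u) (.pair t' u') (.prod A A')
  | proj1 : Conv tyof Γ p p' (.prod A A') → Conv tyof Γ (.proj1 p) (.proj1 p') A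
  | proj2 : Conv tyof Γ p p' (.prod A A') → Conv tyof Γ (.proj2 p) (.proj2 p') A'
  | lam : Conv tyof (A :: Γ) t t' A' → Conv tyof Γ (.lam t) (.lam t') (.arr A A')
  | app : Conv tyof Γ t t' (.arr A A') → Conv tyof Γ u u' A →
      Conv tyof Γ (.app t u) (.app t' u') A'
  | inl : Conv tyof Γ a a' A → Conv tyof Γ (.inl a) (.inl a') (.sum A A')
  | inr : Conv tyof Γ b b' A' → Conv tyof Γ (.inr b) (.inr b') (.sum A A')
  | raise : Conv tyof Γ t t' .empty → Conv tyof Γ (.raise t) (.raise t') A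
  | case : Conv tyof Γ s s' (.sum A A') → Conv tyof (A :: Γ) bl bl' T →
      Conv tyof (A' :: Γ) br br' T →
      Conv tyof Γ (.case s bl br) (.case s' bl' br') T
  -- β laws
  | beta_proj1 : HasType tyof Γ t A → HasType tyof Γ u A' →
      Conv tyof Γ (.proj1 (.pair t u)) t A
  | beta_proj2 : HasType tyof Γ t A → HasType tyof Γ u A' →
      Conv tyof Γ (.proj2 (.pair t u)) u A'
  | beta_app : HasType tyof (A :: Γ) t A' → HasType tyof Γ u A →
      Conv tyof Γ (.app (.lam t) u) (subst (sub0 u) t) A'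
  | beta_inl : HasType tyof Γ a A → HasType tyof (A :: Γ) bl T →
      HasType tyof (A' :: Γ) br T →
      Conv tyof Γ (.case (.inl a) bl br) (subst (sub0 a) bl) T
  | beta_inr : HasType tyof Γ b A' → HasType tyof (A :: Γ) bl T →
      HasType tyof (A' :: Γ) br T →
      Conv tyof Γ (.case (.inr b) bl br) (subst (sub0 b) br) T
  -- η laws
  | eta_unit : HasType tyof Γ t .unit → Conv tyof Γ t .star .unit
  | eta_prod : HasType tyof Γ t (.prod A A') →
      Conv tyof Γ t (.pair (.proj1 t) (.proj2 t)) (.prod A A')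
  | eta_arr : HasType tyof Γ t (.arr A A') →
      Conv tyof Γ t (.lam (.app (rename Nat.succ t) (.var 0))) (.arr A A')
  | eta_empty : HasType tyof Γ s .empty → HasType tyof Γ u T →
      Conv tyof Γ u (.raise s) T
  | eta_sum : HasType tyof Γ s (.sum A A') → HasType tyof (.sum A A' :: Γ) u T →
      Conv tyof Γ (subst (sub0 s) u)
        (.case s (subst inlSub u) (subst inrSub u)) T

/-- `t` is covered by the predicate `F`: `t` is a case tree whose nodes are
eliminations of neutrals at positive types and whose leaves satisfy `F`
(in suitably extended contexts). -/
inductive Covered (tyof : C → Ty B) (F : List (Ty B) → Tm C → Prop) :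
    List (Ty B) → Tm C → Prop
  | leaf : F Γ t → Covered tyof F Γ t
  | raise : Infer tyof Γ n .empty → Covered tyof F Γ (.raise n)
  | case : Infer tyof Γ n (.sum A A') → Covered tyof F (A :: Γ) bl →
      Covered tyof F (A' :: Γ) br → Covered tyof F Γ (.case n bl br)

/-- `ρ` is a (typed) renaming from `Δ` to `Γ`. -/
def IsRen (ρ : Nat → Nat) (Δ Γ : List (Ty B)) : Prop :=
  ∀ n A, Γ[n]? = some A → Δ[ρ n]? = some A

/-- Values at a type, defined by induction on the type (logical relation). -/
def Value (tyof : C → Ty B) : Ty B → List (Ty B) → Tm C → Prop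
  | .base b => Covered tyof (fun Δ u => Infer tyof Δ u (.base b))
  | .empty => Covered tyof (fun Δ u => Infer tyof Δ u .empty)
  | .sum A A' => Covered tyof (fun Δ u =>
      Infer tyof Δ u (.sum A A') ∨
      (∃ a, u = .inl a ∧ Value tyof A Δ a) ∨
      (∃ b, u = .inr b ∧ Value tyof A' Δ b))
  | .unit => fun Γ t => Check tyof Γ t .unit
  | .prod A A' => fun Γ t => Check tyof Γ t (.prod A A') ∧
      (∃ v, Reds (.proj1 t) v ∧ Value tyof A Γ v) ∧
      (∃ v, Reds (.proj2 t) v ∧ Value tyof A' Γ v)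
  | .arr A A' => fun Γ t => Check tyof Γ t (.arr A A') ∧
      ∀ Δ ρ, IsRen ρ Δ Γ → ∀ u, Value tyof A Δ u →
        ∃ v, Reds (.app (rename ρ t) u) v ∧ Value tyof A' Δ v

/-- `t` is reducible at `T` in `Γ`: it reduces to a value at `T`. -/
def Reducible (tyof : C → Ty B) (T : Ty B) (Γ : List (Ty B)) (t : Tm C) : Prop :=
  ∃ v, Reds t v ∧ Value tyof T Γ v

/-- Polarised vocabulary of a type: `voc true A = A⁺`, `voc false A = A⁻`. -/
def voc (p : Bool) : Ty B → Set B
  | .base b => if p then {b} else ∅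
  | .unit => ∅
  | .empty => ∅
  | .prod A A' => voc p A ∪ voc p A'
  | .sum A A' => voc p A ∪ voc p A'
  | .arr A A' => voc (!p) A ∪ voc p A'

/-- Polarised vocabulary of a context. -/
def vocCtx (p : Bool) (Γ : List (Ty B)) : Set B :=
  {b | ∃ A ∈ Γ, b ∈ voc p A}

/-- Context partitions `Γ = Γs ⋈ Γt`. -/
inductive Splits {B : Type} : List (Ty B) → List (Ty B) → List (Ty B) → Type
  | nil : Splits [] [] []
  | left (A : Ty B) : Splits Γ Γs Γt → Splits (A :: Γ) (A :: Γs) Γt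
  | right (A : Ty B) : Splits Γ Γs Γt → Splits (A :: Γ) Γs (A :: Γt)

/-- The renaming embedding `Γs` into `Γ` induced by a partition. -/
def Splits.renS {B : Type} : {Γ Γs Γt : List (Ty B)} → Splits Γ Γs Γt → Nat → Nat
  | _, _, _, .nil => id
  | _, _, _, .left _ s => fun n => match n with | 0 => 0 | m + 1 => s.renS m + 1
  | _, _, _, .right _ s => fun n => s.renS n + 1

/-- The renaming embedding `Γt` into `Γ` induced by a partition. -/
def Splits.renT {B : Type} : {Γ Γs Γt : List (Ty B)} → Splits Γ Γs Γt → Nat → Nat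
  | _, _, _, .nil => id
  | _, _, _, .left _ s => fun n => s.renT n + 1
  | _, _, _, .right _ s => fun n => match n with | 0 => 0 | m + 1 => s.renT m + 1

/-- The composite `r[l..]` where `l` lives in one part of the context
(embedded via `ρl`) and the tail variables of `r` live in the other part
(embedded via `ρr`); the result lives in the full context. -/
def splice (ρl ρr : Nat → Nat) (l r : Tm C) : Tm C :=
  subst (fun n => match n with
    | 0 => rename ρl l
    | m + 1 => .var (ρr m)) r

/-- The (empty) constant-typing function for a language without constants. -/
def noCst {B : Type} : Empty → Ty B := fun c => c.elim

/-- The set of constants occurring in a term. -/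
def constsOf : Tm C → Set C
  | .cst c => {c}
  | .var _ => ∅
  | .star => ∅
  | .pair t u => constsOf t ∪ constsOf u
  | .proj1 t => constsOf t
  | .proj2 t => constsOf t
  | .lam t => constsOf t
  | .app t u => constsOf t ∪ constsOf u
  | .inl t => constsOf t
  | .inr t => constsOf t
  | .raise t => constsOf t
  | .case s bl br => constsOf s ∪ constsOf bl ∪ constsOf br


section CCAux

variable {C : Type}

/-! ### Renaming lemmas -/

lemma liftRen_ext {ρ σ : Nat → Nat} (h : ∀ n, ρ n = σ n) :
    ∀ n, liftRen ρ n = liftRen σ n := fun n => by cases n <;> simp [liftRen, h]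

lemma rename_ext : ∀ (t : Tm C) (ρ σ : Nat → Nat), (∀ n, ρ n = σ n) →
    rename ρ t = rename σ t
  | .cst _, _, _, _ => rfl
  | .var n, _, _, h => by simp [rename, h n]
  | .star, _, _, _ => rfl
  | .pair a b, ρ, σ, h => by simp [rename, rename_ext a ρ σ h, rename_ext b ρ σ h]
  | .proj1 a, ρ, σ, h => by simp [rename, rename_ext a ρ σ h]
  | .proj2 a, ρ, σ, h => by simp [rename, rename_ext a ρ σ h]
  | .lam a, ρ, σ, h => by simp [rename, rename_ext a _ _ (liftRen_ext h)]
  | .app a b, ρ, σ, h => by simp [rename, rename_ext a ρ σ h, rename_ext b ρ σ h]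
  | .inl a, ρ, σ, h => by simp [rename, rename_ext a ρ σ h]
  | .inr a, ρ, σ, h => by simp [rename, rename_ext a ρ σ h]
  | .raise a, ρ, σ, h => by simp [rename, rename_ext a ρ σ h]
  | .case s bl br, ρ, σ, h => by
      simp [rename, rename_ext s ρ σ h, rename_ext bl _ _ (liftRen_ext h),
        rename_ext br _ _ (liftRen_ext h)]

lemma liftRen_comp (ρ σ : Nat → Nat) :
    ∀ n, liftRen ρ (liftRen σ n) = liftRen (fun m => ρ (σ m)) n := fun n => by
  cases n <;> simp [liftRen]

lemma ren_ren : ∀ (t : Tm C) (ρ σ : Nat → Nat),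
    rename ρ (rename σ t) = rename (fun n => ρ (σ n)) t
  | .cst _, _, _ => rfl
  | .var n, _, _ => rfl
  | .star, _, _ => rfl
  | .pair a b, ρ, σ => by simp [rename, ren_ren a ρ σ, ren_ren b ρ σ]
  | .proj1 a, ρ, σ => by simp [rename, ren_ren a ρ σ]
  | .proj2 a, ρ, σ => by simp [rename, ren_ren a ρ σ]
  | .lam a, ρ, σ => by
      simp [rename, ren_ren a (liftRen ρ) (liftRen σ),
        rename_ext a _ _ (liftRen_comp ρ σ)]
  | .app a b, ρ, σ => by simp [rename, ren_ren a ρ σ, ren_ren b ρ σ]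
  | .inl a, ρ, σ => by simp [rename, ren_ren a ρ σ]
  | .inr a, ρ, σ => by simp [rename, ren_ren a ρ σ]
  | .raise a, ρ, σ => by simp [rename, ren_ren a ρ σ]
  | .case s bl br, ρ, σ => by
      simp [rename, ren_ren s ρ σ, ren_ren bl (liftRen ρ) (liftRen σ),
        ren_ren br (liftRen ρ) (liftRen σ),
        rename_ext bl _ _ (liftRen_comp ρ σ), rename_ext br _ _ (liftRen_comp ρ σ)]

/-- Action of renamings on eliminations. -/
def renameElim (ρ : Nat → Nat) : Elim C → Elim C
  | .eapp u => .eapp (rename ρ u)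
  | .eproj1 => .eproj1
  | .eproj2 => .eproj2
  | .ecase bl br => .ecase (rename (liftRen ρ) bl) (rename (liftRen ρ) br)

lemma weakenElim_eq (e : Elim C) : weakenElim e = renameElim Nat.succ e := by
  cases e <;> rfl

lemma plug_rename (ρ : Nat → Nat) (e : Elim C) (t : Tm C) :
    rename ρ (plug e t) = plug (renameElim ρ e) (rename ρ t) := by
  cases e <;> rfl

lemma renameElim_weaken (ρ : Nat → Nat) (e : Elim C) :
    weakenElim (renameElim ρ e) = renameElim (liftRen ρ) (weakenElim e) := by
  cases e with
  | eapp u =>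
      simp [weakenElim, renameElim, ren_ren]
      exact rename_ext u _ _ (fun n => rfl)
  | eproj1 => rfl
  | eproj2 => rfl
  | ecase bl br =>
      simp [weakenElim, renameElim, ren_ren]
      constructor <;>
        exact rename_ext _ _ _ (fun n => by cases n <;> simp [liftRen])

/-- The key commutation: weakening past a weakened elimination. -/
lemma weaken_plug (e : Elim C) (x : Tm C) :
    rename (liftRen Nat.succ) (plug (weakenElim e) x)
      = plug (weakenElim (weakenElim e)) (rename (liftRen Nat.succ) x) := by
  rw [plug_rename, weakenElim_eq e, renameElim_weaken, weakenElim_eq e]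

/-! ### Closure of one-step cc-reduction under renaming -/

lemma ccbase_rename {t u : Tm C} (ρ : Nat → Nat) (h : CCBase t u) :
    CCBase (rename ρ t) (rename ρ u) := by
  cases h with
  | raise e t0 =>
      rw [plug_rename]
      exact CCBase.raise (renameElim ρ e) (rename ρ t0)
  | case e s bl br =>
      rw [plug_rename]
      have := CCBase.case (renameElim ρ e) (rename ρ s)
        (rename (liftRen ρ) bl) (rename (liftRen ρ) br)
      simpa [rename, plug_rename, renameElim_weaken] using this

lemma stepcc_rename {t u : Tm C} (ρ : Nat → Nat) (h : StepCC t u) :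
    StepCC (rename ρ t) (rename ρ u) := by
  induction h generalizing ρ with
  | base b => exact Cong.base (ccbase_rename ρ b)
  | pairL _ ih => exact Cong.pairL (ih ρ)
  | pairR _ ih => exact Cong.pairR (ih ρ)
  | proj1 _ ih => exact Cong.proj1 (ih ρ)
  | proj2 _ ih => exact Cong.proj2 (ih ρ)
  | lam _ ih => exact Cong.lam (ih (liftRen ρ))
  | appL _ ih => exact Cong.appL (ih ρ)
  | appR _ ih => exact Cong.appR (ih ρ)
  | inl _ ih => exact Cong.inl (ih ρ)
  | inr _ ih => exact Cong.inr (ih ρ)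
  | raise _ ih => exact Cong.raise (ih ρ)
  | caseS _ ih => exact Cong.caseS (ih ρ)
  | caseL _ ih => exact Cong.caseL (ih (liftRen ρ))
  | caseR _ ih => exact Cong.caseR (ih (liftRen ρ))

/-! ### Inversion lemmas for `CCBase` -/

lemma ccbase_cases {t v : Tm C} (h : CCBase t v) :
    (∃ e t0, t = plug e (.raise t0) ∧ v = .raise t0) ∨
    (∃ e s bl br, t = plug e (.case s bl br) ∧
      v = .case s (plug (weakenElim e) bl) (plug (weakenElim e) br)) := by
  cases h with
  | raise e t0 => exact Or.inl ⟨e, t0, rfl, rfl⟩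
  | case e s bl br => exact Or.inr ⟨e, s, bl, br, rfl, rfl⟩

lemma plug_inj {e e' : Elim C} {r r' : Tm C} (h : plug e r = plug e' r') :
    e = e' ∧ r = r' := by
  cases e <;> cases e' <;> simp_all [plug]

lemma ccbase_det {t a b : Tm C} (h1 : CCBase t a) (h2 : CCBase t b) : a = b := by
  rcases ccbase_cases h1 with ⟨e, t0, rfl, rfl⟩ | ⟨e, s, bl, br, rfl, rfl⟩ <;>
    rcases ccbase_cases h2 with ⟨e2, t2, he, rfl⟩ | ⟨e2, s2, bl2, br2, he, rfl⟩ <;>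
    obtain ⟨rfl, h'⟩ := plug_inj he <;> simp_all

lemma not_cc_raise {t u : Tm C} (h : CCBase (.raise t) u) : False := by
  rcases ccbase_cases h with ⟨e, t0, he, _⟩ | ⟨e, s, bl, br, he, _⟩ <;>
    cases e <;> simp [plug] at he

lemma not_cc_pair {a b u : Tm C} (h : CCBase (.pair a b) u) : False := by
  rcases ccbase_cases h with ⟨e, t0, he, _⟩ | ⟨e, s, bl, br, he, _⟩ <;>
    cases e <;> simp [plug] at he

lemma not_cc_lam {a u : Tm C} (h : CCBase (.lam a) u) : False := by
  rcases ccbase_cases h with ⟨e, t0, he, _⟩ | ⟨e, s, bl, br, he, _⟩ <;>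
    cases e <;> simp [plug] at he

lemma not_cc_inl {a u : Tm C} (h : CCBase (.inl a) u) : False := by
  rcases ccbase_cases h with ⟨e, t0, he, _⟩ | ⟨e, s, bl, br, he, _⟩ <;>
    cases e <;> simp [plug] at he

lemma not_cc_inr {a u : Tm C} (h : CCBase (.inr a) u) : False := by
  rcases ccbase_cases h with ⟨e, t0, he, _⟩ | ⟨e, s, bl, br, he, _⟩ <;>
    cases e <;> simp [plug] at he

lemma ccbase_case_inv {s bl br X : Tm C} (h : CCBase (.case s bl br) X) :
    (∃ t0, s = .raise t0 ∧ X = .raise t0) ∨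
    (∃ s2 l2 r2, s = .case s2 l2 r2 ∧
      X = .case s2
        (.case l2 (rename (liftRen Nat.succ) bl) (rename (liftRen Nat.succ) br))
        (.case r2 (rename (liftRen Nat.succ) bl) (rename (liftRen Nat.succ) br))) := by
  rcases ccbase_cases h with ⟨e, t0, he, rfl⟩ | ⟨e, s2, l2, r2, he, rfl⟩ <;>
    cases e <;> simp [plug] at he
  · obtain ⟨rfl, rfl, rfl⟩ := he
    exact Or.inl ⟨t0, rfl, rfl⟩
  · obtain ⟨rfl, rfl, rfl⟩ := he
    exact Or.inr ⟨s2, l2, r2, rfl, rfl⟩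

/-! ### Steps in eliminations -/

/-- One-step cc-reduction inside an elimination's payload. -/
inductive ElimStep : Elim C → Elim C → Prop
  | app {u u' : Tm C} : StepCC u u' → ElimStep (.eapp u) (.eapp u')
  | caseL {bl bl' br : Tm C} : StepCC bl bl' → ElimStep (.ecase bl br) (.ecase bl' br)
  | caseR {bl br br' : Tm C} : StepCC br br' → ElimStep (.ecase bl br) (.ecase bl br')

lemma elimstep_weaken {e e' : Elim C} (h : ElimStep e e') :
    ElimStep (weakenElim e) (weakenElim e') := by
  cases h with
  | app h => exact ElimStep.app (stepcc_rename _ h)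
  | caseL h => exact ElimStep.caseL (stepcc_rename _ h)
  | caseR h => exact ElimStep.caseR (stepcc_rename _ h)

lemma elimstep_plug {e e' : Elim C} (h : ElimStep e e') (x : Tm C) :
    StepCC (plug e x) (plug e' x) := by
  cases h with
  | app h => exact Cong.appR h
  | caseL h => exact Cong.caseL h
  | caseR h => exact Cong.caseR h

lemma plug_cong {x x' : Tm C} (e : Elim C) (h : StepCC x x') :
    StepCC (plug e x) (plug e x') := by
  cases e with
  | eapp u => exact Cong.appL h
  | eproj1 => exact Cong.proj1 h
  | eproj2 => exact Cong.proj2 h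
  | ecase bl br => exact Cong.caseS h

/-- Inversion of a step out of a plugged term. -/
lemma step_plug_inv (e : Elim C) (r : Tm C) {w : Tm C} (h : StepCC (plug e r) w) :
    CCBase (plug e r) w ∨ (∃ r', StepCC r r' ∧ w = plug e r') ∨
      (∃ e', ElimStep e e' ∧ w = plug e' r) := by
  cases e with
  | eapp u =>
      cases h with
      | base b => exact Or.inl b
      | appL h => exact Or.inr (Or.inl ⟨_, h, rfl⟩)
      | appR h => exact Or.inr (Or.inr ⟨_, ElimStep.app h, rfl⟩)
  | eproj1 =>
      cases h with
      | base b => exact Or.inl b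
      | proj1 h => exact Or.inr (Or.inl ⟨_, h, rfl⟩)
  | eproj2 =>
      cases h with
      | base b => exact Or.inl b
      | proj2 h => exact Or.inr (Or.inl ⟨_, h, rfl⟩)
  | ecase bl br =>
      cases h with
      | base b => exact Or.inl b
      | caseS h => exact Or.inr (Or.inl ⟨_, h, rfl⟩)
      | caseL h => exact Or.inr (Or.inr ⟨_, ElimStep.caseL h, rfl⟩)
      | caseR h => exact Or.inr (Or.inr ⟨_, ElimStep.caseR h, rfl⟩)

/-! ### Resolution of critical pairs -/

lemma reds_single {a b : Tm C} (h : StepCC a b) : RedsCC a b :=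
  Relation.ReflTransGen.single h

lemma reds_refl {a : Tm C} : RedsCC a a := Relation.ReflTransGen.refl

/-- Critical pair lemma: a root cc-redex vs an arbitrary step. -/
lemma cp {t u u2 : Tm C} (h1 : CCBase t u) (h2 : StepCC t u2) :
    ∃ v, RedsCC u v ∧ RedsCC u2 v := by
  cases h1 with
  | raise e t0 =>
      rcases step_plug_inv e _ h2 with hb | ⟨r', hr, rfl⟩ | ⟨e', he, rfl⟩
      · obtain rfl := ccbase_det hb (CCBase.raise e t0)
        exact ⟨_, reds_refl, reds_refl⟩
      · cases hr with
        | base b => exact absurd b (fun b => not_cc_raise b)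
        | raise h' =>
            exact ⟨_, reds_single (Cong.raise h'),
              reds_single (Cong.base (CCBase.raise e _))⟩
      · exact ⟨_, reds_refl, reds_single (Cong.base (CCBase.raise e' t0))⟩
  | case e s bl br =>
      rcases step_plug_inv e _ h2 with hb | ⟨r', hr, rfl⟩ | ⟨e', he, rfl⟩
      · obtain rfl := ccbase_det hb (CCBase.case e s bl br)
        exact ⟨_, reds_refl, reds_refl⟩
      · cases hr with
        | base b =>
            rcases ccbase_case_inv b with ⟨t0, rfl, rfl⟩ | ⟨s2, l2, r2, rfl, rfl⟩
            · -- inner scrutinee is a raise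
              exact ⟨.raise t0,
                reds_single (Cong.base
                  (CCBase.raise (.ecase (plug (weakenElim e) bl) (plug (weakenElim e) br)) t0)),
                reds_single (Cong.base (CCBase.raise e t0))⟩
            · -- inner scrutinee is a case: the nested critical pair
              set bl1 := rename (liftRen Nat.succ) bl with hbl1
              set br1 := rename (liftRen Nat.succ) br with hbr1
              refine ⟨.case s2
                  (.case l2 (plug (weakenElim (weakenElim e)) bl1)
                            (plug (weakenElim (weakenElim e)) br1))
                  (.case r2 (plug (weakenElim (weakenElim e)) bl1)
                            (plug (weakenElim (weakenElim e)) br1)), ?_, ?_⟩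
              · have hstep : StepCC
                    (.case (.case s2 l2 r2) (plug (weakenElim e) bl) (plug (weakenElim e) br))
                    (.case s2
                      (.case l2 (rename (liftRen Nat.succ) (plug (weakenElim e) bl))
                                (rename (liftRen Nat.succ) (plug (weakenElim e) br)))
                      (.case r2 (rename (liftRen Nat.succ) (plug (weakenElim e) bl))
                                (rename (liftRen Nat.succ) (plug (weakenElim e) br)))) :=
                  Cong.base (CCBase.case
                    (.ecase (plug (weakenElim e) bl) (plug (weakenElim e) br)) s2 l2 r2)
                rw [weaken_plug e bl, weaken_plug e br] at hstep
                exact reds_single hstep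
              · refine Relation.ReflTransGen.head
                  (Cong.base (CCBase.case e s2 (.case l2 bl1 br1) (.case r2 bl1 br1))) ?_
                refine Relation.ReflTransGen.head
                  (Cong.caseL (Cong.base (CCBase.case (weakenElim e) l2 bl1 br1))) ?_
                exact reds_single
                  (Cong.caseR (Cong.base (CCBase.case (weakenElim e) r2 bl1 br1)))
        | caseS h' =>
            exact ⟨_, reds_single (Cong.caseS h'),
              reds_single (Cong.base (CCBase.case e _ bl br))⟩
        | caseL h' =>
            exact ⟨_, reds_single (Cong.caseL (plug_cong (weakenElim e) h')),
              reds_single (Cong.base (CCBase.case e s _ br))⟩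
        | caseR h' =>
            exact ⟨_, reds_single (Cong.caseR (plug_cong (weakenElim e) h')),
              reds_single (Cong.base (CCBase.case e s bl _))⟩
      · refine ⟨.case s (plug (weakenElim e') bl) (plug (weakenElim e') br), ?_, ?_⟩
        · exact Relation.ReflTransGen.head
            (Cong.caseL (elimstep_plug (elimstep_weaken he) bl))
            (reds_single (Cong.caseR (elimstep_plug (elimstep_weaken he) br)))
        · exact reds_single (Cong.base (CCBase.case e' s bl br))

/-! ### Local confluence -/

lemma lc {t u1 u2 : Tm C} (h1 : StepCC t u1) (h2 : StepCC t u2) :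
    ∃ v, RedsCC u1 v ∧ RedsCC u2 v := by
  induction h1 generalizing u2 with
  | base b => exact cp b h2
  | pairL h ih =>
      cases h2 with
      | base b => exact absurd b (fun b => not_cc_pair b)
      | pairL h' =>
          obtain ⟨v, ha, hb⟩ := ih h'
          exact ⟨.pair v _, Relation.ReflTransGen.lift (fun x => Tm.pair x _)
            (fun _ _ h => Cong.pairL h) _ _ ha,
            Relation.ReflTransGen.lift (fun x => Tm.pair x _)
            (fun _ _ h => Cong.pairL h) _ _ hb⟩
      | pairR h' =>
          exact ⟨_, reds_single (Cong.pairR h'), reds_single (Cong.pairL h)⟩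
  | pairR h ih =>
      cases h2 with
      | base b => exact absurd b (fun b => not_cc_pair b)
      | pairL h' =>
          exact ⟨_, reds_single (Cong.pairL h'), reds_single (Cong.pairR h)⟩
      | pairR h' =>
          obtain ⟨v, ha, hb⟩ := ih h'
          exact ⟨.pair _ v, Relation.ReflTransGen.lift (fun x => Tm.pair _ x)
            (fun _ _ h => Cong.pairR h) _ _ ha,
            Relation.ReflTransGen.lift (fun x => Tm.pair _ x)
            (fun _ _ h => Cong.pairR h) _ _ hb⟩
  | proj1 h ih =>
      cases h2 with
      | base b => obtain ⟨v, ha, hb⟩ := cp b (Cong.proj1 h); exact ⟨v, hb, ha⟩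
      | proj1 h' =>
          obtain ⟨v, ha, hb⟩ := ih h'
          exact ⟨.proj1 v, Relation.ReflTransGen.lift Tm.proj1
            (fun _ _ h => Cong.proj1 h) _ _ ha,
            Relation.ReflTransGen.lift Tm.proj1 (fun _ _ h => Cong.proj1 h) _ _ hb⟩
  | proj2 h ih =>
      cases h2 with
      | base b => obtain ⟨v, ha, hb⟩ := cp b (Cong.proj2 h); exact ⟨v, hb, ha⟩
      | proj2 h' =>
          obtain ⟨v, ha, hb⟩ := ih h'
          exact ⟨.proj2 v, Relation.ReflTransGen.lift Tm.proj2
            (fun _ _ h => Cong.proj2 h) _ _ ha,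
            Relation.ReflTransGen.lift Tm.proj2 (fun _ _ h => Cong.proj2 h) _ _ hb⟩
  | lam h ih =>
      cases h2 with
      | base b => exact absurd b (fun b => not_cc_lam b)
      | lam h' =>
          obtain ⟨v, ha, hb⟩ := ih h'
          exact ⟨.lam v, Relation.ReflTransGen.lift Tm.lam
            (fun _ _ h => Cong.lam h) _ _ ha,
            Relation.ReflTransGen.lift Tm.lam (fun _ _ h => Cong.lam h) _ _ hb⟩
  | appL h ih =>
      cases h2 with
      | base b => obtain ⟨v, ha, hb⟩ := cp b (Cong.appL h); exact ⟨v, hb, ha⟩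
      | appL h' =>
          obtain ⟨v, ha, hb⟩ := ih h'
          exact ⟨.app v _, Relation.ReflTransGen.lift (fun x => Tm.app x _)
            (fun _ _ h => Cong.appL h) _ _ ha,
            Relation.ReflTransGen.lift (fun x => Tm.app x _)
            (fun _ _ h => Cong.appL h) _ _ hb⟩
      | appR h' =>
          exact ⟨_, reds_single (Cong.appR h'), reds_single (Cong.appL h)⟩
  | appR h ih =>
      cases h2 with
      | base b => obtain ⟨v, ha, hb⟩ := cp b (Cong.appR h); exact ⟨v, hb, ha⟩
      | appL h' =>
          exact ⟨_, reds_single (Cong.appL h'), reds_single (Cong.appR h)⟩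
      | appR h' =>
          obtain ⟨v, ha, hb⟩ := ih h'
          exact ⟨.app _ v, Relation.ReflTransGen.lift (fun x => Tm.app _ x)
            (fun _ _ h => Cong.appR h) _ _ ha,
            Relation.ReflTransGen.lift (fun x => Tm.app _ x)
            (fun _ _ h => Cong.appR h) _ _ hb⟩
  | inl h ih =>
      cases h2 with
      | base b => exact absurd b (fun b => not_cc_inl b)
      | inl h' =>
          obtain ⟨v, ha, hb⟩ := ih h'
          exact ⟨.inl v, Relation.ReflTransGen.lift Tm.inl
            (fun _ _ h => Cong.inl h) _ _ ha,
            Relation.ReflTransGen.lift Tm.inl (fun _ _ h => Cong.inl h) _ _ hb⟩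
  | inr h ih =>
      cases h2 with
      | base b => exact absurd b (fun b => not_cc_inr b)
      | inr h' =>
          obtain ⟨v, ha, hb⟩ := ih h'
          exact ⟨.inr v, Relation.ReflTransGen.lift Tm.inr
            (fun _ _ h => Cong.inr h) _ _ ha,
            Relation.ReflTransGen.lift Tm.inr (fun _ _ h => Cong.inr h) _ _ hb⟩
  | raise h ih =>
      cases h2 with
      | base b => exact absurd b (fun b => not_cc_raise b)
      | raise h' =>
          obtain ⟨v, ha, hb⟩ := ih h'
          exact ⟨.raise v, Relation.ReflTransGen.lift Tm.raise
            (fun _ _ h => Cong.raise h) _ _ ha,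
            Relation.ReflTransGen.lift Tm.raise (fun _ _ h => Cong.raise h) _ _ hb⟩
  | caseS h ih =>
      cases h2 with
      | base b => obtain ⟨v, ha, hb⟩ := cp b (Cong.caseS h); exact ⟨v, hb, ha⟩
      | caseS h' =>
          obtain ⟨v, ha, hb⟩ := ih h'
          exact ⟨.case v _ _, Relation.ReflTransGen.lift (fun x => Tm.case x _ _)
            (fun _ _ h => Cong.caseS h) _ _ ha,
            Relation.ReflTransGen.lift (fun x => Tm.case x _ _)
            (fun _ _ h => Cong.caseS h) _ _ hb⟩
      | caseL h' =>
          exact ⟨_, reds_single (Cong.caseL h'), reds_single (Cong.caseS h)⟩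
      | caseR h' =>
          exact ⟨_, reds_single (Cong.caseR h'), reds_single (Cong.caseS h)⟩
  | caseL h ih =>
      cases h2 with
      | base b => obtain ⟨v, ha, hb⟩ := cp b (Cong.caseL h); exact ⟨v, hb, ha⟩
      | caseS h' =>
          exact ⟨_, reds_single (Cong.caseS h'), reds_single (Cong.caseL h)⟩
      | caseL h' =>
          obtain ⟨v, ha, hb⟩ := ih h'
          exact ⟨.case _ v _, Relation.ReflTransGen.lift (fun x => Tm.case _ x _)
            (fun _ _ h => Cong.caseL h) _ _ ha,
            Relation.ReflTransGen.lift (fun x => Tm.case _ x _)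
            (fun _ _ h => Cong.caseL h) _ _ hb⟩
      | caseR h' =>
          exact ⟨_, reds_single (Cong.caseR h'), reds_single (Cong.caseL h)⟩
  | caseR h ih =>
      cases h2 with
      | base b => obtain ⟨v, ha, hb⟩ := cp b (Cong.caseR h); exact ⟨v, hb, ha⟩
      | caseS h' =>
          exact ⟨_, reds_single (Cong.caseS h'), reds_single (Cong.caseR h)⟩
      | caseL h' =>
          exact ⟨_, reds_single (Cong.caseL h'), reds_single (Cong.caseR h)⟩
      | caseR h' =>
          obtain ⟨v, ha, hb⟩ := ih h'
          exact ⟨.case _ _ v, Relation.ReflTransGen.lift (fun x => Tm.case _ _ x)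
            (fun _ _ h => Cong.caseR h) _ _ ha,
            Relation.ReflTransGen.lift (fun x => Tm.case _ _ x)
            (fun _ _ h => Cong.caseR h) _ _ hb⟩

/-! ### A decreasing measure: strong normalisation of cc-reduction -/

/-- A weight that strictly decreases along commuting conversions. -/
def mu : Tm C → Nat
  | .cst _ => 1
  | .var _ => 1
  | .star => 1
  | .pair t u => mu t + mu u + 1
  | .proj1 t => mu t * 2
  | .proj2 t => mu t * 2
  | .lam t => mu t + 1
  | .app t u => mu t * (mu u + 1)
  | .inl t => mu t + 1
  | .inr t => mu t + 1
  | .raise t => mu t + 1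
  | .case s bl br => mu s * (mu bl + mu br + 1)

lemma mu_pos : ∀ t : Tm C, 0 < mu t
  | .cst _ => by simp [mu]
  | .var _ => by simp [mu]
  | .star => by simp [mu]
  | .pair t u => by simp [mu]
  | .proj1 t => by have := mu_pos t; simp [mu]; omega
  | .proj2 t => by have := mu_pos t; simp [mu]; omega
  | .lam t => by simp [mu]
  | .app t u => by
      simp only [mu]; exact Nat.mul_pos (mu_pos t) (by omega)
  | .inl t => by simp [mu]
  | .inr t => by simp [mu]
  | .raise t => by simp [mu]
  | .case s bl br => by
      simp only [mu]; exact Nat.mul_pos (mu_pos s) (by omega)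

lemma mu_rename : ∀ (t : Tm C) (ρ : Nat → Nat), mu (rename ρ t) = mu t
  | .cst _, _ => rfl
  | .var _, _ => rfl
  | .star, _ => rfl
  | .pair a b, ρ => by simp [rename, mu, mu_rename a ρ, mu_rename b ρ]
  | .proj1 a, ρ => by simp [rename, mu, mu_rename a ρ]
  | .proj2 a, ρ => by simp [rename, mu, mu_rename a ρ]
  | .lam a, ρ => by simp [rename, mu, mu_rename a (liftRen ρ)]
  | .app a b, ρ => by simp [rename, mu, mu_rename a ρ, mu_rename b ρ]
  | .inl a, ρ => by simp [rename, mu, mu_rename a ρ]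
  | .inr a, ρ => by simp [rename, mu, mu_rename a ρ]
  | .raise a, ρ => by simp [rename, mu, mu_rename a ρ]
  | .case s bl br, ρ => by
      simp [rename, mu, mu_rename s ρ, mu_rename bl (liftRen ρ),
        mu_rename br (liftRen ρ)]

/-- Weight of an elimination. -/
def elimK : Elim C → Nat
  | .eapp u => mu u + 1
  | .eproj1 => 2
  | .eproj2 => 2
  | .ecase bl br => mu bl + mu br + 1

lemma mu_plug (e : Elim C) (t : Tm C) : mu (plug e t) = mu t * elimK e := by
  cases e <;> rfl

lemma elimK_ge2 (e : Elim C) : 2 ≤ elimK e := by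
  cases e with
  | eapp u => have := mu_pos u; simp [elimK]; omega
  | eproj1 => simp [elimK]
  | eproj2 => simp [elimK]
  | ecase bl br => have := mu_pos bl; have := mu_pos br; simp [elimK]; omega

lemma elimK_weaken (e : Elim C) : elimK (weakenElim e) = elimK e := by
  cases e <;> simp [weakenElim, elimK, mu_rename]

lemma ccbase_mu {t u : Tm C} (h : CCBase t u) : mu u < mu t := by
  cases h with
  | raise e t0 =>
      rw [mu_plug]
      have h1 := elimK_ge2 e
      have h2 := mu_pos (Tm.raise t0)
      nlinarith
  | case e s bl br =>
      rw [mu_plug]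
      have h1 := elimK_ge2 e
      have h2 := mu_pos s
      simp only [mu, mu_plug, elimK_weaken]
      have key : mu bl * elimK e + mu br * elimK e + 1 + 1
          ≤ (mu bl + mu br + 1) * elimK e := by nlinarith
      calc mu s * (mu bl * elimK e + mu br * elimK e + 1)
          < mu s * (mu bl * elimK e + mu br * elimK e + 1 + 1) :=
            mul_lt_mul_of_pos_left (by omega) h2
        _ ≤ mu s * ((mu bl + mu br + 1) * elimK e) :=
            Nat.mul_le_mul_left _ key
        _ = mu s * (mu bl + mu br + 1) * elimK e := by ring

lemma step_mu {t u : Tm C} (h : StepCC t u) : mu u < mu t := by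
  induction h with
  | base b => exact ccbase_mu b
  | pairL _ ih => simp only [mu]; omega
  | pairR _ ih => simp only [mu]; omega
  | proj1 _ ih => simp only [mu]; omega
  | proj2 _ ih => simp only [mu]; omega
  | lam _ ih => simp only [mu]; omega
  | appL h ih =>
      simp only [mu]
      exact mul_lt_mul_of_pos_right ih (by omega)
  | appR h ih =>
      simp only [mu]
      exact mul_lt_mul_of_pos_left (by omega) (mu_pos _)
  | inl _ ih => simp only [mu]; omega
  | inr _ ih => simp only [mu]; omega
  | raise _ ih => simp only [mu]; omega
  | caseS h ih =>
      simp only [mu]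
      exact mul_lt_mul_of_pos_right ih (by omega)
  | caseL h ih =>
      simp only [mu]
      exact mul_lt_mul_of_pos_left (by omega) (mu_pos _)
  | caseR h ih =>
      simp only [mu]
      exact mul_lt_mul_of_pos_left (by omega) (mu_pos _)

/-! ### Newman's lemma -/

lemma newman : ∀ (n : ℕ) (t u u' : Tm C), mu t ≤ n → RedsCC t u → RedsCC t u' →
    ∃ v, RedsCC u v ∧ RedsCC u' v := by
  intro n
  induction n with
  | zero => intro t u u' hle _ _; have := mu_pos t; omega
  | succ n ih =>
      intro t u u' hle h h'
      rcases Relation.ReflTransGen.cases_head h with rfl | ⟨a, ha, hau⟩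
      · exact ⟨u', h', reds_refl⟩
      rcases Relation.ReflTransGen.cases_head h' with rfl | ⟨b, hb, hbu'⟩
      · exact ⟨u, reds_refl, h⟩
      obtain ⟨c, hac, hbc⟩ := lc ha hb
      have ha' : mu a ≤ n := by have := step_mu ha; omega
      obtain ⟨d, hud, hcd⟩ := ih a u c ha' hau hac
      have hb' : mu b ≤ n := by have := step_mu hb; omega
      obtain ⟨v, hdv, hu'v⟩ := ih b d u' hb'
        (Relation.ReflTransGen.trans hbc hcd) hbu'
      exact ⟨v, Relation.ReflTransGen.trans hud hdv, hu'v⟩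

end CCAux

/-- **Local confluence of commuting conversions**, and, as a consequence
(by strong normalisation and Newman's lemma), **confluence** of
commuting-conversion reduction. -/
theorem cc_locally_confluent_and_confluent {C : Type} :
    (∀ t u u' : Tm C, StepCC t u → StepCC t u' →
      ∃ v : Tm C, RedsCC u v ∧ RedsCC u' v) ∧
    (∀ t u u' : Tm C, RedsCC t u → RedsCC t u' →
      ∃ v : Tm C, RedsCC u v ∧ RedsCC u' v) :=
  ⟨fun _ _ _ h h' => lc h h',
   fun t u u' h h' => newman (mu t) t u u' le_rfl h h'⟩

end STLCp
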